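/- Let N_M be a C^m I-net on the finite multiset M, and N_{S_M} the corresponding CI-net on the indexed-copy set S_M (consisting of the translated statements c̄ for c ∈ N_M together with the statements cs_i = {o_i ▷ o_{i+1}}). If M_a ⇝ M_b is a CI-flip with respect to a statement c ∈ N_M, then there exists S_{M_a} ∈ ss(M_a) such that S_{M_a} ⇝ overline{M_b} is a CI-flip with respect to c̄ ∈ N_{S_M}; conversely, if S_{M_a} ⇝ S_{M_b} is a CI-flip w.r.t. c̄ for some S_{M_a} ∈ ss(M_a) and S_{M_b} ∈ ss(M_b), then M_a ⇝ M_b is a CI-flip w.r.t. c. -/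
import Mathlib


variable {O : Type*} [DecidableEq O]

/-- A strict partial order: irreflexive, asymmetric, transitive. -/
def IsPrefRel {α : Type*} (r : α → α → Prop) : Prop :=
  (∀ a, ¬ r a a) ∧ (∀ a b, r a b → ¬ r b a) ∧ (∀ a b c, r a b → r b c → r a c)

/-- A `CᵐI`-statement `M⁺, M⁻ : M₁ ▷ M₂` on the finite multiset `M`. -/
structure CmIStmt (O : Type*) [DecidableEq O] (M : Multiset O) where
  mp : Multiset O
  mm : Multiset O
  m1 : Multiset O
  m2 : Multiset O
  hp : mp ≤ M
  hm : mm ≤ M - mp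
  h1 : m1 ≤ M - (mp + mm)
  h2 : m2 ≤ M - (mp + mm)
  n1 : m1 ≠ 0
  n2 : m2 ≠ 0
  d12 : m1 ∩ m2 = 0

/-- `r` satisfies a `CᵐI`-statement. -/
def SatCmStmt (M : Multiset O) (r : Multiset O → Multiset O → Prop)
    (c : CmIStmt O M) : Prop :=
  ∀ M' ≤ M - (c.mp + c.mm + c.m1 + c.m2),
    r (M' + c.mp + c.m1) (M' + c.mp + c.m2)

/-- Monotonicity on sub-multisets of `M`. -/
def MonotonicOn (M : Multiset O) (r : Multiset O → Multiset O → Prop) : Prop :=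
  ∀ a b : Multiset O, a ≤ M → b < a → r a b

/-- Strict-partial-order conditions restricted to sub-multisets of `M`. -/
def IsPrefRelOn (M : Multiset O) (r : Multiset O → Multiset O → Prop) : Prop :=
  (∀ a, a ≤ M → ¬ r a a) ∧
  (∀ a b, a ≤ M → b ≤ M → r a b → ¬ r b a) ∧
  (∀ a b c, a ≤ M → b ≤ M → c ≤ M → r a b → r b c → r a c)

/-- `r` satisfies a `CᵐI`-net. -/
def SatCmNet (M : Multiset O) (r : Multiset O → Multiset O → Prop)
    (N : Set (CmIStmt O M)) : Prop :=
  MonotonicOn M r ∧ ∀ c ∈ N, SatCmStmt M r c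

/-- Satisfiability of a `CᵐI`-net. -/
def CmSatisfiable (M : Multiset O) (N : Set (CmIStmt O M)) : Prop :=
  ∃ r : Multiset O → Multiset O → Prop, IsPrefRelOn M r ∧ SatCmNet M r N

/-- CI-flip with respect to a single `CᵐI`-statement. -/
def CmFlipStmt (M : Multiset O) (c : CmIStmt O M) (a b : Multiset O) : Prop :=
  ∃ M' ≤ M - (c.mp + c.mm + c.m1 + c.m2),
    a = M' + c.mp + c.m1 ∧ b = M' + c.mp + c.m2

/-- Worsening flip for a `CᵐI`-net: a `⊃`-flip within `M` or a CI-flip. -/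
def CmWFlip (M : Multiset O) (N : Set (CmIStmt O M)) (a b : Multiset O) : Prop :=
  (b < a ∧ a ≤ M) ∨ ∃ c ∈ N, CmFlipStmt M c a b

/-- The intersection of all preference relations satisfying `N`. -/
def CmInduced (M : Multiset O) (N : Set (CmIStmt O M)) (a b : Multiset O) : Prop :=
  ∀ r : Multiset O → Multiset O → Prop, IsPrefRelOn M r ∧ SatCmNet M r N → r a b

variable [Fintype O]

/-- The set of indexed copies `{(o, i) : 1 ≤ i ≤ m_M(o)}`. -/
def SMset (M : Multiset O) : Finset (O × ℕ) :=
  Finset.univ.biUnion fun o : O => (Finset.Icc 1 (M.count o)).image fun i => (o, i)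

/-- The block of indexed copies `{o_a, ..., o_b}` of `o`. -/
def block (o : O) (a b : ℕ) : Finset (O × ℕ) :=
  (Finset.Icc a b).image fun i => (o, i)

/-- `S ∈ ss(M')`: `S ⊆ S_M` and for every `o`, `S` has exactly `m_{M'}(o)`
indexed copies of `o`. -/
def InSS (M M' : Multiset O) (S : Finset (O × ℕ)) : Prop :=
  S ⊆ SMset M ∧ ∀ o : O, (S.filter fun p => p.1 = o).card = M'.count o

/-- `overline{M'} = ⋃_o {o_1, ..., o_{m_{M'}(o)}}`. -/
def ovl (M' : Multiset O) : Finset (O × ℕ) :=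
  Finset.univ.biUnion fun o : O => block o 1 (M'.count o)

/-- One step of the index-shifting order `>_i` on subsets of `S_M`: the
symmetric difference is `{o_i, o_{i+1}}` with `o_i ∈ S₁`, `o_{i+1} ∈ S₂`. -/
def IStep (M : Multiset O) (S1 S2 : Finset (O × ℕ)) : Prop :=
  S1 ⊆ SMset M ∧ S2 ⊆ SMset M ∧
    ∃ (o : O) (i : ℕ), (S1 ∪ S2) \ (S1 ∩ S2) = {(o, i), (o, i + 1)} ∧
      (o, i) ∈ S1 ∧ (o, i + 1) ∈ S2

/-- A CI-flip with respect to one of the chain statements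
`cs_i = {o_i ▷ o_{i+1} : o ∈ O, 1 ≤ i < m_M(o)}`. -/
def CsFlip (M : Multiset O) (S T : Finset (O × ℕ)) : Prop :=
  ∃ (o : O) (i : ℕ), 1 ≤ i ∧ i < M.count o ∧
    ∃ S' ⊆ SMset M \ {(o, i), (o, i + 1)},
      S = insert (o, i) S' ∧ T = insert (o, i + 1) S'

/-- `Ŝ⁺`: forward blocks `{o_1, ..., o_{m⁺(o)}}`. -/
def hatP (M : Multiset O) (c : CmIStmt O M) : Finset (O × ℕ) :=
  Finset.univ.biUnion fun o : O => block o 1 (c.mp.count o)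

/-- `Ŝ⁻`: backward blocks `{o_{m_M(o) - m⁻(o) + 1}, ..., o_{m_M(o)}}`. -/
def hatM (M : Multiset O) (c : CmIStmt O M) : Finset (O × ℕ) :=
  Finset.univ.biUnion fun o : O =>
    block o (M.count o - c.mm.count o + 1) (M.count o)

/-- `Ŝ₁`: backward blocks below `Ŝ⁻`. -/
def hat1 (M : Multiset O) (c : CmIStmt O M) : Finset (O × ℕ) :=
  Finset.univ.biUnion fun o : O =>
    block o (M.count o - c.mm.count o - c.m1.count o + 1)
      (M.count o - c.mm.count o)

/-- `Ŝ₂`: forward blocks just above `Ŝ⁺`. -/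
def hat2 (M : Multiset O) (c : CmIStmt O M) : Finset (O × ℕ) :=
  Finset.univ.biUnion fun o : O =>
    block o (c.mp.count o + 1) (c.mp.count o + c.m2.count o)

/-- CI-flip with respect to the translated statement `c̄` on the ground set
`S_M`. -/
def HatFlip (M : Multiset O) (c : CmIStmt O M) (Sa Sb : Finset (O × ℕ)) : Prop :=
  ∃ S' ⊆ SMset M \ (hatP M c ∪ hatM M c ∪ hat1 M c ∪ hat2 M c),
    Sa = S' ∪ hatP M c ∪ hat1 M c ∧ Sb = S' ∪ hatP M c ∪ hat2 M c

/-- Worsening flip with respect to the CI-net reduction `N_{S_M}`: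
`⊃`-flips within `S_M`, flips of translated statements, and chain flips. -/
def RedFlip (M : Multiset O) (N : Set (CmIStmt O M))
    (Sa Sb : Finset (O × ℕ)) : Prop :=
  (Sb ⊂ Sa ∧ Sa ⊆ SMset M) ∨ (∃ c ∈ N, HatFlip M c Sa Sb) ∨ CsFlip M Sa Sb

set_option linter.unusedSectionVars false

section Helpers

variable [Fintype O]

/-- Number of indexed copies of `o` in `S`. -/
def cnt (S : Finset (O × ℕ)) (o : O) : ℕ := (S.filter fun p => p.1 = o).card

lemma mem_block_iff {o o' : O} {a b j : ℕ} :
    (o', j) ∈ block o a b ↔ o' = o ∧ a ≤ j ∧ j ≤ b := by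
  constructor
  · intro h
    rcases Finset.mem_image.1 h with ⟨i, hi, he⟩
    cases he
    exact ⟨rfl, (Finset.mem_Icc.1 hi).1, (Finset.mem_Icc.1 hi).2⟩
  · rintro ⟨rfl, h1, h2⟩
    exact Finset.mem_image.2 ⟨j, Finset.mem_Icc.2 ⟨h1, h2⟩, rfl⟩

lemma mem_bu {f g : O → ℕ} {o : O} {j : ℕ} :
    (o, j) ∈ Finset.univ.biUnion (fun o' => block o' (f o') (g o')) ↔
      f o ≤ j ∧ j ≤ g o := by
  constructor
  · intro h
    rcases Finset.mem_biUnion.1 h with ⟨o', -, h⟩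
    rcases mem_block_iff.1 h with ⟨rfl, h1, h2⟩
    exact ⟨h1, h2⟩
  · rintro ⟨h1, h2⟩
    exact Finset.mem_biUnion.2 ⟨o, Finset.mem_univ _, mem_block_iff.2 ⟨rfl, h1, h2⟩⟩

lemma filter_bu (f g : O → ℕ) (o : O) :
    (Finset.univ.biUnion fun o' => block o' (f o') (g o')).filter
      (fun p => p.1 = o) = block o (f o) (g o) := by
  ext ⟨o', j⟩
  simp only [Finset.mem_filter, mem_block_iff]
  constructor
  · rintro ⟨h, rfl⟩
    exact ⟨rfl, mem_bu.1 h⟩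
  · rintro ⟨rfl, h1, h2⟩
    exact ⟨mem_bu.2 ⟨h1, h2⟩, rfl⟩

lemma cnt_bu (f g : O → ℕ) (o : O) :
    cnt (Finset.univ.biUnion fun o' => block o' (f o') (g o')) o = g o + 1 - f o := by
  rw [cnt, filter_bu, block,
    Finset.card_image_of_injective _ (fun a b h => by simpa using h)]
  exact Nat.card_Icc _ _

lemma cnt_union {S T : Finset (O × ℕ)} (h : Disjoint S T) (o : O) :
    cnt (S ∪ T) o = cnt S o + cnt T o := by
  rw [cnt, Finset.filter_union,
    Finset.card_union_of_disjoint (Finset.disjoint_filter_filter h)]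
  rfl

lemma cnt_mono {S T : Finset (O × ℕ)} (h : S ⊆ T) (o : O) :
    cnt S o ≤ cnt T o :=
  Finset.card_le_card (Finset.filter_subset_filter _ h)

lemma SMset_eq (M : Multiset O) :
    SMset M = Finset.univ.biUnion fun o => block o 1 (M.count o) := rfl

lemma ovl_eq (M' : Multiset O) :
    ovl M' = Finset.univ.biUnion fun o => block o 1 (M'.count o) := rfl

lemma key_bound (M : Multiset O) (c : CmIStmt O M) (o : O) :
    c.mp.count o + c.mm.count o + c.m1.count o + c.m2.count o ≤ M.count o := by
  have hp := Multiset.count_le_of_le o c.hp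
  have hm := Multiset.count_le_of_le o c.hm
  have h1 := Multiset.count_le_of_le o c.h1
  have h2 := Multiset.count_le_of_le o c.h2
  have hd : min (c.m1.count o) (c.m2.count o) = 0 := by
    have := congrArg (Multiset.count o) c.d12
    simpa [Multiset.count_inter] using this
  simp only [Multiset.count_sub, Multiset.count_add] at hm h1 h2
  omega

lemma mem_SMset_iff {M : Multiset O} {o : O} {j : ℕ} :
    (o, j) ∈ SMset M ↔ 1 ≤ j ∧ j ≤ M.count o := by
  unfold SMset; exact mem_bu

lemma mem_ovl_iff {M' : Multiset O} {o : O} {j : ℕ} :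
    (o, j) ∈ ovl M' ↔ 1 ≤ j ∧ j ≤ M'.count o := by
  unfold ovl; exact mem_bu

lemma mem_hatP_iff {M : Multiset O} {c : CmIStmt O M} {o : O} {j : ℕ} :
    (o, j) ∈ hatP M c ↔ 1 ≤ j ∧ j ≤ c.mp.count o := by
  unfold hatP; exact mem_bu

lemma mem_hatM_iff {M : Multiset O} {c : CmIStmt O M} {o : O} {j : ℕ} :
    (o, j) ∈ hatM M c ↔
      M.count o - c.mm.count o + 1 ≤ j ∧ j ≤ M.count o := by
  unfold hatM; exact mem_bu

lemma mem_hat1_iff {M : Multiset O} {c : CmIStmt O M} {o : O} {j : ℕ} :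
    (o, j) ∈ hat1 M c ↔
      M.count o - c.mm.count o - c.m1.count o + 1 ≤ j ∧
        j ≤ M.count o - c.mm.count o := by
  unfold hat1; exact mem_bu

lemma mem_hat2_iff {M : Multiset O} {c : CmIStmt O M} {o : O} {j : ℕ} :
    (o, j) ∈ hat2 M c ↔
      c.mp.count o + 1 ≤ j ∧ j ≤ c.mp.count o + c.m2.count o := by
  unfold hat2; exact mem_bu

lemma cnt_hatP (M : Multiset O) (c : CmIStmt O M) (o : O) :
    cnt (hatP M c) o = c.mp.count o := by
  unfold hatP; rw [cnt_bu]; omega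

lemma cnt_hat1 (M : Multiset O) (c : CmIStmt O M) (o : O) :
    cnt (hat1 M c) o = c.m1.count o := by
  unfold hat1; rw [cnt_bu]
  have := key_bound M c o
  omega

lemma cnt_hat2 (M : Multiset O) (c : CmIStmt O M) (o : O) :
    cnt (hat2 M c) o = c.m2.count o := by
  unfold hat2; rw [cnt_bu]; omega

lemma sdiff_hats_eq (M : Multiset O) (c : CmIStmt O M) :
    SMset M \ (hatP M c ∪ hatM M c ∪ hat1 M c ∪ hat2 M c) =
      Finset.univ.biUnion fun o =>
        block o (c.mp.count o + c.m2.count o + 1)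
          (M.count o - c.mm.count o - c.m1.count o) := by
  ext ⟨o, j⟩
  have := key_bound M c o
  simp only [Finset.mem_sdiff, Finset.mem_union, mem_SMset_iff, mem_hatP_iff,
    mem_hatM_iff, mem_hat1_iff, mem_hat2_iff, mem_bu, not_or]
  omega

end Helpers

/-- if `Ma ⇝ Mb` is a CI-flip w.r.t. a `CᵐI`-statement `c`, then
some `S_{Ma} ∈ ss(Ma)` has a CI-flip to `overline{Mb}` w.r.t. `c̄`; conversely,
a CI-flip w.r.t. `c̄` between members of `ss(Ma)` and `ss(Mb)` yields a CI-flip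
`Ma ⇝ Mb` w.r.t. `c`. -/
theorem stmt_16 (M : Multiset O) (c : CmIStmt O M) (Ma Mb : Multiset O) :
    (CmFlipStmt M c Ma Mb →
      ∃ Sa : Finset (O × ℕ), InSS M Ma Sa ∧ HatFlip M c Sa (ovl Mb)) ∧
    (∀ Sa Sb : Finset (O × ℕ), InSS M Ma Sa → InSS M Mb Sb →
      HatFlip M c Sa Sb → CmFlipStmt M c Ma Mb) := by
  have key := key_bound M c
  constructor
  · rintro ⟨M', hM', rfl, rfl⟩
    have hK : ∀ o : O, M'.count o + (c.mp.count o + c.mm.count o +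
        c.m1.count o + c.m2.count o) ≤ M.count o := by
      intro o
      have h := Multiset.count_le_of_le o hM'
      simp only [Multiset.count_sub, Multiset.count_add] at h
      have := key o
      omega
    set S' : Finset (O × ℕ) := Finset.univ.biUnion fun o =>
      block o (c.mp.count o + c.m2.count o + 1)
        (c.mp.count o + c.m2.count o + M'.count o) with hS'
    have hmemS' : ∀ o j, (o, j) ∈ S' ↔
        c.mp.count o + c.m2.count o + 1 ≤ j ∧
          j ≤ c.mp.count o + c.m2.count o + M'.count o := by
      intro o j; rw [hS']; exact mem_bu
    have hsub : S' ⊆ SMset M \ (hatP M c ∪ hatM M c ∪ hat1 M c ∪ hat2 M c) := by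
      intro p hp
      obtain ⟨o, j⟩ := p
      rw [hmemS'] at hp
      simp only [Finset.mem_sdiff, Finset.mem_union, mem_SMset_iff, mem_hatP_iff,
        mem_hatM_iff, mem_hat1_iff, mem_hat2_iff, not_or]
      have := key o; have := hK o
      omega
    have dS'P : Disjoint S' (hatP M c) := by
      rw [Finset.disjoint_left]
      intro p hp hq
      obtain ⟨o, j⟩ := p
      rw [hmemS'] at hp; rw [mem_hatP_iff] at hq
      omega
    have dS'1 : Disjoint S' (hat1 M c) := by
      rw [Finset.disjoint_left]
      intro p hp hq
      obtain ⟨o, j⟩ := p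
      rw [hmemS'] at hp; rw [mem_hat1_iff] at hq
      have := key o; have := hK o
      omega
    have dP1 : Disjoint (hatP M c) (hat1 M c) := by
      rw [Finset.disjoint_left]
      intro p hp hq
      obtain ⟨o, j⟩ := p
      rw [mem_hatP_iff] at hp; rw [mem_hat1_iff] at hq
      have := key o
      omega
    refine ⟨S' ∪ hatP M c ∪ hat1 M c, ⟨?_, ?_⟩, S', hsub, rfl, ?_⟩
    · intro p hp
      obtain ⟨o, j⟩ := p
      simp only [Finset.mem_union, hmemS', mem_hatP_iff, mem_hat1_iff] at hp
      rw [mem_SMset_iff]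
      have := key o; have := hK o
      omega
    · intro o
      show cnt (S' ∪ hatP M c ∪ hat1 M c) o = _
      rw [cnt_union (Finset.disjoint_union_left.2 ⟨dS'1, dP1⟩),
        cnt_union dS'P, cnt_hatP, cnt_hat1, hS', cnt_bu]
      simp only [Multiset.count_add]
      omega
    · ext ⟨o, j⟩
      simp only [mem_ovl_iff, Finset.mem_union, hmemS', mem_hatP_iff,
        mem_hat2_iff, Multiset.count_add]
      have := key o; have := hK o
      omega
  · rintro Sa Sb ⟨hSas, hSac⟩ ⟨hSbs, hSbc⟩ ⟨S', hS'sub, rfl, rfl⟩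
    have hnot : ∀ p ∈ S', p ∉ hatP M c ∪ hatM M c ∪ hat1 M c ∪ hat2 M c :=
      fun p hp => (Finset.mem_sdiff.1 (hS'sub hp)).2
    have dS'P : Disjoint S' (hatP M c) := Finset.disjoint_left.2 fun p hp hq =>
      hnot p hp (by simp [Finset.mem_union, hq])
    have dS'1 : Disjoint S' (hat1 M c) := Finset.disjoint_left.2 fun p hp hq =>
      hnot p hp (by simp [Finset.mem_union, hq])
    have dS'2 : Disjoint S' (hat2 M c) := Finset.disjoint_left.2 fun p hp hq =>
      hnot p hp (by simp [Finset.mem_union, hq])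
    have dP1 : Disjoint (hatP M c) (hat1 M c) := by
      rw [Finset.disjoint_left]
      intro p hp hq
      obtain ⟨o, j⟩ := p
      rw [mem_hatP_iff] at hp; rw [mem_hat1_iff] at hq
      have := key o
      omega
    have dP2 : Disjoint (hatP M c) (hat2 M c) := by
      rw [Finset.disjoint_left]
      intro p hp hq
      obtain ⟨o, j⟩ := p
      rw [mem_hatP_iff] at hp; rw [mem_hat2_iff] at hq
      omega
    set M' : Multiset O := ∑ o : O, Multiset.replicate (cnt S' o) o with hM'def
    have hMc : ∀ o : O, M'.count o = cnt S' o := by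
      intro o
      rw [hM'def, Multiset.count_sum']
      simp [Multiset.count_replicate]
    have hbound : ∀ o : O, cnt S' o ≤
        M.count o - (c.mp.count o + c.mm.count o + c.m1.count o + c.m2.count o) := by
      intro o
      have h := cnt_mono hS'sub o
      rw [sdiff_hats_eq, cnt_bu] at h
      have := key o
      omega
    have hle : M' ≤ M - (c.mp + c.mm + c.m1 + c.m2) := by
      rw [Multiset.le_iff_count]
      intro o
      rw [hMc]
      simp only [Multiset.count_sub, Multiset.count_add]
      have := hbound o
      omega
    refine ⟨M', hle, ?_, ?_⟩
    · ext o
      have ha := hSac o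
      have : cnt (S' ∪ hatP M c ∪ hat1 M c) o = Ma.count o := ha
      rw [cnt_union (Finset.disjoint_union_left.2 ⟨dS'1, dP1⟩),
        cnt_union dS'P, cnt_hatP, cnt_hat1] at this
      simp only [Multiset.count_add]
      rw [hMc]
      omega
    · ext o
      have hb := hSbc o
      have : cnt (S' ∪ hatP M c ∪ hat2 M c) o = Mb.count o := hb
      rw [cnt_union (Finset.disjoint_union_left.2 ⟨dS'2, dP2⟩),
        cnt_union dS'P, cnt_hatP, cnt_hat2] at this
      simp only [Multiset.count_add]
      rw [hMc]
      omega
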